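/- For all t ∈ ℝ and all real d, m, the first component of exp(tA) applied to the vector (θd² + m, m) equals (e^{-ηt}/a)·[(e^{at}(θ_m + aθ) - θ_m)·d² + a·m]. -/

import Mathlib

open Matrix Real

/-- for all `t`, `d`, `m`, the first component of
`exp (t • A)` applied to the vector `(θ d² + m, m)` equals
`(e^{-ηt}/a) * ((e^{at}(θm + aθ) - θm) d² + a m)`. -/
theorem petc_triggering_bound_first_component
    (η ε₃ θ θm : ℝ) (hη : 0 < η) (hε₃ : 0 ≤ ε₃) (hθ : 0 < θ) (hθm : 0 < θm)
    (a : ℝ) (ha : a = 1 + ε₃ + η)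
    (A : Matrix (Fin 2) (Fin 2) ℝ)
    (hA : A = !![1 + ε₃ + θm / θ, -(a + θm / θ); θm / θ, -(η + θm / θ)]) :
    ∀ (t d m : ℝ),
      (NormedSpace.exp (t • A)).mulVec ![θ * d ^ 2 + m, m] 0 =
        (Real.exp (-η * t) / a) *
          ((Real.exp (a * t) * (θm + a * θ) - θm) * d ^ 2 + a * m) := by
  intro t d m
  have ha0 : 0 < a := by rw [ha]; linarith
  have hane : a ≠ 0 := ne_of_gt ha0
  have hθne : θ ≠ 0 := ne_of_gt hθ
  have haθ : a * θ ≠ 0 := mul_ne_zero hane hθne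
  set P : Matrix (Fin 2) (Fin 2) ℝ := !![a * θ + θm, 1; θm, 1] with hP
  set Q : Matrix (Fin 2) (Fin 2) ℝ :=
    (a * θ)⁻¹ • !![1, -1; -θm, a * θ + θm] with hQ
  have hPQ : P * Q = 1 := by
    ext i j
    fin_cases i <;> fin_cases j <;>
      simp [hP, hQ, Matrix.mul_apply, Fin.sum_univ_two, Matrix.one_apply] <;>
      field_simp <;> ring
  have hPinv : P⁻¹ = Q := Matrix.inv_eq_right_inv hPQ
  have hPunit : IsUnit P := by
    have hdet : P.det * Q.det = 1 := by rw [← Matrix.det_mul, hPQ, Matrix.det_one]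
    exact (Matrix.isUnit_iff_isUnit_det P).mpr (IsUnit.of_mul_eq_one _ hdet)
  set D : Fin 2 → ℝ := ![(a - η) * t, -η * t] with hD
  have hdiag : t • A = P * Matrix.diagonal D * P⁻¹ := by
    rw [hPinv]
    ext i j
    fin_cases i <;> fin_cases j <;>
      simp [hA, hP, hQ, hD, Matrix.mul_apply, Fin.sum_univ_two,
        Matrix.diagonal_apply, Matrix.vecMul_diagonal, Matrix.vecMul, dotProduct, ha] <;> field_simp <;> ring
  rw [hdiag, Matrix.exp_conj P (Matrix.diagonal D) hPunit, Matrix.exp_diagonal, hPinv]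
  have hexpD : NormedSpace.exp D = ![Real.exp ((a - η) * t), Real.exp (-η * t)] := by
    ext i
    rw [Pi.coe_exp, ← Real.exp_eq_exp_ℝ]
    fin_cases i <;> simp [hD]
  rw [hexpD]
  have key : Real.exp ((a - η) * t) = Real.exp (a * t) * Real.exp (-η * t) := by
    rw [← Real.exp_add]; ring_nf
  simp only [hP, hQ, Matrix.mulVec, Matrix.mul_apply, dotProduct,
    Fin.sum_univ_two, Matrix.diagonal, Matrix.smul_apply, Matrix.cons_val',
    Matrix.cons_val_zero, Matrix.cons_val_one, Matrix.head_cons,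
    Matrix.head_fin_const, Matrix.of_apply, Matrix.cons_val_fin_one,
    Matrix.empty_val', smul_eq_mul]
  rw [key]
  field_simp
  simp only [zero_ne_one, one_ne_zero, ↓reduceIte]
  ring
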